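/- arXiv:1410.6924 — 2 statements merged into one kernel-verified Lean document; each statement's English description precedes it below -/
import Mathlib

section
/- Let Δ_{3,7}(X) = (X^{21} − 1)(X − 1)/((X^3 − 1)(X^7 − 1)) and Δ_{4,5}(X) = (X^{20} − 1)(X − 1)/((X^4 − 1)(X^5 − 1)) in ℤ[X]. Then Δ_{3,7} ≠ Δ_{4,5} as polynomials, but for every real number t > 0 the product over the complex roots a of Δ_{3,7} (with multiplicity) of max(|a|, t) equals the product over the complex roots b of Δ_{4,5} (with multiplicity) of max(|b|, t). -/
open Polynomial

lemma torus_aux {P : ℂ[X]} {n m k : ℕ} (hk : k ≠ 0)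
    (h : P * ((X ^ n - 1) * (X ^ m - 1)) = (X ^ k - 1) * (X - 1)) :
    ∀ t : ℝ, (P.roots.map (fun a => max ‖a‖ t)).prod
      = (max 1 t) ^ P.natDegree := by
  intro t
  have habs : ∀ a ∈ P.roots, ‖a‖ = 1 := by
    intro a ha
    have hPa : P.eval a = 0 := by
      have hP0 : P ≠ 0 := by
        intro h0
        have := congrArg (Polynomial.eval (0 : ℂ)) h
        simp [h0, zero_pow hk] at this
      exact (mem_roots hP0).mp ha
    have := congrArg (Polynomial.eval a) h
    simp [hPa] at this
    rcases this with h1 | h2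
    all_goals rw [sub_eq_zero] at *
    · have : ‖a‖ ^ k = 1 := by rw [← norm_pow, h1, norm_one]
      rcases (pow_eq_one_iff_of_ne_zero hk).mp this with h | ⟨h, _⟩
      · exact h
      · have := norm_nonneg a; rw [h] at this; linarith
    · simp [h2]
  have hcard : Multiset.card P.roots = P.natDegree :=
    (splits_iff_card_roots).mp (IsAlgClosed.splits P)
  rw [Multiset.map_congr rfl (fun a ha => by rw [habs a ha])]
  simp [Multiset.map_const', hcard]

/-- The Alexander polynomials `Δ_{3,7}(X) = (X^21 - 1)(X - 1)/((X^3 - 1)(X^7 - 1))` and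
`Δ_{4,5}(X) = (X^20 - 1)(X - 1)/((X^4 - 1)(X^5 - 1))` in `ℤ[X]` are distinct polynomials,
but for every real `t > 0` the product over the complex roots `a` of `Δ_{3,7}` (with
multiplicity) of `max |a| t` equals the corresponding product for `Δ_{4,5}`. -/
theorem torus_knots_3_7_and_4_5 (Δ₁ Δ₂ : ℤ[X])
    (hΔ₁ : Δ₁ * ((X ^ 3 - 1) * (X ^ 7 - 1)) = (X ^ 21 - 1) * (X - 1))
    (hΔ₂ : Δ₂ * ((X ^ 4 - 1) * (X ^ 5 - 1)) = (X ^ 20 - 1) * (X - 1)) :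
    Δ₁ ≠ Δ₂ ∧
      ∀ t : ℝ, 0 < t →
        ((Δ₁.map (Int.castRingHom ℂ)).roots.map (fun a => max ‖a‖ t)).prod =
          ((Δ₂.map (Int.castRingHom ℂ)).roots.map (fun b => max ‖b‖ t)).prod := by
  constructor
  · intro hEq
    have e1 := congrArg (Polynomial.eval (2 : ℤ)) hΔ₁
    have e2 := congrArg (Polynomial.eval (2 : ℤ)) hΔ₂
    rw [hEq] at e1
    simp only [eval_mul, eval_sub, eval_pow, eval_X, eval_one] at e1 e2
    norm_num at e1 e2
    omega
  · intro t ht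
    have H₁ : (Δ₁.map (Int.castRingHom ℂ)) * ((X ^ 3 - 1) * (X ^ 7 - 1))
        = (X ^ 21 - 1) * (X - 1) := by
      have := congrArg (Polynomial.map (Int.castRingHom ℂ)) hΔ₁
      simpa [Polynomial.map_mul, Polynomial.map_sub, Polynomial.map_pow,
        Polynomial.map_one, Polynomial.map_X] using this
    have H₂ : (Δ₂.map (Int.castRingHom ℂ)) * ((X ^ 4 - 1) * (X ^ 5 - 1))
        = (X ^ 20 - 1) * (X - 1) := by
      have := congrArg (Polynomial.map (Int.castRingHom ℂ)) hΔ₂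
      simpa [Polynomial.map_mul, Polynomial.map_sub, Polynomial.map_pow,
        Polynomial.map_one, Polynomial.map_X] using this
    have hd₁ : (Δ₁.map (Int.castRingHom ℂ)).natDegree = 12 := by
      have hP0 : Δ₁.map (Int.castRingHom ℂ) ≠ 0 := by
        intro h0
        have := congrArg (Polynomial.eval (0 : ℂ)) H₁
        simp [h0] at this
      have hQ0 : ((X : ℂ[X]) ^ 3 - 1) * (X ^ 7 - 1) ≠ 0 := by
        intro h0
        have := congrArg (Polynomial.eval (0 : ℂ)) h0
        simp at this
      have := congrArg Polynomial.natDegree H₁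
      rw [natDegree_mul hP0 hQ0] at this
      have h1 : (((X : ℂ[X]) ^ 3 - 1) * (X ^ 7 - 1)).natDegree = 10 := by
        compute_degree!
      have h2 : (((X : ℂ[X]) ^ 21 - 1) * (X - 1)).natDegree = 22 := by
        compute_degree!
      omega
    have hd₂ : (Δ₂.map (Int.castRingHom ℂ)).natDegree = 12 := by
      have hP0 : Δ₂.map (Int.castRingHom ℂ) ≠ 0 := by
        intro h0
        have := congrArg (Polynomial.eval (0 : ℂ)) H₂
        simp [h0] at this
      have hQ0 : ((X : ℂ[X]) ^ 4 - 1) * (X ^ 5 - 1) ≠ 0 := by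
        intro h0
        have := congrArg (Polynomial.eval (0 : ℂ)) h0
        simp at this
      have := congrArg Polynomial.natDegree H₂
      rw [natDegree_mul hP0 hQ0] at this
      have h1 : (((X : ℂ[X]) ^ 4 - 1) * (X ^ 5 - 1)).natDegree = 9 := by
        compute_degree!
      have h2 : (((X : ℂ[X]) ^ 20 - 1) * (X - 1)).natDegree = 21 := by
        compute_degree!
      omega
    rw [torus_aux (by norm_num) H₁ t, torus_aux (by norm_num) H₂ t, hd₁, hd₂]
end

section
/- Let P be a nonzero polynomial with complex coefficients and let t > 0 be a real number. Let Q(X) = P(tX) be the polynomial obtained by substituting tX for X. Then the absolute value of the leading coefficient of Q times the product over the complex roots b of Q (with multiplicity) of max(|b|, 1) equals the absolute value of the leading coefficient of P times the product over the complex roots a of P (with multiplicity) of max(|a|, t). -/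
open Polynomial

/-- Scaling identity for the Mahler measure: if `P` is a nonzero complex polynomial,
`t > 0`, and `Q(X) = P(tX)`, then `|lead(Q)| · ∏_{roots b of Q} max |b| 1` equals
`|lead(P)| · ∏_{roots a of P} max |a| t`. -/
theorem mahler_measure_scaling (P : ℂ[X]) (hP : P ≠ 0) (t : ℝ) (ht : 0 < t)
    (Q : ℂ[X]) (hQ : Q = P.comp (C (t : ℂ) * X)) :
    ‖Q.leadingCoeff‖ * (Q.roots.map (fun b => max ‖b‖ 1)).prod =
      ‖P.leadingCoeff‖ * (P.roots.map (fun a => max ‖a‖ t)).prod := by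
  have htC : (t : ℂ) ≠ 0 := by exact_mod_cast ht.ne'
  set c := P.leadingCoeff with hc
  have hcne : c ≠ 0 := leadingCoeff_ne_zero.mpr hP
  set n := P.natDegree with hn
  have hcard : P.roots.card = n := (splits_iff_card_roots.mp (IsAlgClosed.splits P))
  -- factor P
  have hPfac : P = C c * (P.roots.map fun a => X - C a).prod := by
    symm
    apply C_leadingCoeff_mul_prod_multiset_X_sub_C hcard
  -- compute Q explicitly
  have hQfac : Q = C (c * (t : ℂ) ^ n) * ((P.roots.map fun a => a / (t:ℂ)).map fun b => X - C b).prod := by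
    rw [hQ]
    conv_lhs => rw [hPfac]
    rw [mul_comp, C_comp, multiset_prod_comp]
    rw [Multiset.map_map, Multiset.map_map]
    have : ∀ a : ℂ, (X - C a).comp (C (t : ℂ) * X) = C (t : ℂ) * (X - C (a / (t:ℂ))) := by
      intro a
      simp only [sub_comp, X_comp, C_comp, mul_sub, ← C_mul]
      rw [mul_div_cancel₀ _ htC]
    simp only [Function.comp, this]
    rw [Multiset.prod_map_mul, Multiset.map_const', Multiset.prod_replicate, hcard,
      ← C_pow, mul_left_comm, ← mul_assoc, ← C_mul]
    ring_nf
    congr 1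
    congr 1
    apply Multiset.map_congr rfl
    intro x _
    rw [mul_comm]
  have hmonic : ((P.roots.map fun a => a / (t:ℂ)).map fun b => X - C b).prod.Monic :=
    monic_multiset_prod_of_monic _ _ fun a _ => monic_X_sub_C a
  have hclead : Q.leadingCoeff = c * (t : ℂ) ^ n := by
    rw [hQfac, leadingCoeff_mul, leadingCoeff_C, hmonic.leadingCoeff, mul_one]
  have hroots : Q.roots = P.roots.map fun a => a / (t:ℂ) := by
    rw [hQfac, roots_C_mul _ (mul_ne_zero hcne (pow_ne_zero _ htC)),
      roots_multiset_prod_X_sub_C]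
  rw [hclead, hroots, Multiset.map_map]
  rw [norm_mul, norm_pow]
  have habs_t : ‖(t : ℂ)‖ = t := by
    rw [Complex.norm_real, Real.norm_of_nonneg ht.le]
  rw [habs_t]
  rw [mul_assoc]
  congr 1
  rw [← hcard, ← Multiset.prod_replicate, ← Multiset.map_const' P.roots t,
    ← Multiset.prod_map_mul]
  congr 1
  apply Multiset.map_congr rfl
  intro a _
  simp only [Function.comp_apply]
  rw [norm_div, habs_t, mul_max_of_nonneg _ _ ht.le, mul_div_cancel₀ _ ht.ne', mul_one]
end
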